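/- Let W_1,...,W_n and S_{i→j} (for i < j ≤ n) be finite-dimensional subspaces of a vector space with S_{i→j} ≤ W_i for all i < j. Then for each j ≤ n: h(W_j | W_[j+1,n]) + Σ_{i<j} h(S_{i→j} | W_[i+1,n]) ≤ Σ_{i<j} dim S_{i→j} + h(W_j | Σ_{i<j} S_{i→j} + W_[j+1,n]), where h(A|B) = dim(A+B) − dim B and W_[a,b] = Σ_{a ≤ m ≤ b} W_m. (Dimension version of Proposition 1, using monotonicity of conditional dimension.) -/

import Mathlib

open Module Finset

/-- Conditional dimension: `h(A|B) = dim(A+B) - dim(B)`. -/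
noncomputable def condDim {F V : Type*} [Field F] [AddCommGroup V] [Module F V]
    (A B : Submodule F V) : ℤ :=
  (finrank F ↥(A ⊔ B) : ℤ) - (finrank F ↥B : ℤ)

section Aux

variable {F V : Type*} [Field F] [AddCommGroup V] [Module F V]

/-- Chain rule (exact identity): `h(A ⊔ B | C) = h(A | B ⊔ C) + h(B | C)`. -/
lemma condDim_chain (A B C : Submodule F V) :
    condDim (A ⊔ B) C = condDim A (B ⊔ C) + condDim B C := by
  unfold condDim
  rw [sup_assoc]
  ring

/-- Monotonicity of `condDim` in the conditioning variable. -/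
lemma condDim_anti (A : Submodule F V) {B C : Submodule F V} (h : B ≤ C)
    [FiniteDimensional F ↥(A ⊔ C)] : condDim A C ≤ condDim A B := by
  haveI : FiniteDimensional F ↥(A ⊔ B) :=
    Submodule.finiteDimensional_of_le (sup_le_sup_left h A)
  haveI : FiniteDimensional F ↥C := Submodule.finiteDimensional_of_le (le_sup_right : C ≤ A ⊔ C)
  have key : (finrank F ↥(A ⊔ C) : ℤ) + finrank F ↥B
      ≤ (finrank F ↥(A ⊔ B) : ℤ) + finrank F ↥C := by
    have hsub : finrank F ↥((A ⊔ B) ⊔ C) + finrank F ↥((A ⊔ B) ⊓ C)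
        = finrank F ↥(A ⊔ B) + finrank F ↥C :=
      Submodule.finrank_sup_add_finrank_inf_eq (A ⊔ B) C
    have hAC : (A ⊔ B) ⊔ C = A ⊔ C := by
      rw [sup_assoc, sup_eq_right.mpr h]
    haveI : FiniteDimensional F ↥((A ⊔ B) ⊓ C) :=
      Submodule.finiteDimensional_of_le (inf_le_left : (A ⊔ B) ⊓ C ≤ A ⊔ B)
    have hB : finrank F ↥B ≤ finrank F ↥((A ⊔ B) ⊓ C) :=
      Submodule.finrank_mono (le_inf le_sup_right h)
    rw [hAC] at hsub
    omega
  unfold condDim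
  omega

/-- `h(A|B) ≤ dim A`. -/
lemma condDim_le_finrank (A B : Submodule F V)
    [FiniteDimensional F ↥A] [FiniteDimensional F ↥B] :
    condDim A B ≤ (finrank F ↥A : ℤ) := by
  have := Submodule.finrank_add_le_finrank_add_finrank A B
  unfold condDim
  omega

/-- `dim` of a finite sup is at most the sum of `dim`s. -/
lemma finrank_finset_sup_le (s : Finset ℕ) (f : ℕ → Submodule F V)
    (hf : ∀ i, FiniteDimensional F ↥(f i)) :
    (finrank F ↥(s.sup f) : ℤ) ≤ ∑ i ∈ s, (finrank F ↥(f i) : ℤ) := by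
  classical
  induction s using Finset.induction with
  | empty => simp
  | insert _ _ hx ih =>
    rename_i a s
    rw [Finset.sup_insert, Finset.sum_insert hx]
    haveI : FiniteDimensional F ↥(s.sup f) := Submodule.finiteDimensional_finset_sup s f
    have := Submodule.finrank_add_le_finrank_add_finrank (f a) (s.sup f)
    have h2 : (finrank F ↥(f a ⊔ s.sup f) : ℤ)
        ≤ (finrank F ↥(f a) : ℤ) + finrank F ↥(s.sup f) := by exact_mod_cast this
    omega

/-- Telescoping: `h(sup_{i∈[a,b]} S i | C) = Σ_{i∈[a,b]} h(S i | sup_{k∈[i+1,b]} S k ⊔ C)`. -/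
lemma condDim_sup_sum (S : ℕ → Submodule F V) (C : Submodule F V) (b : ℕ) :
    ∀ k a, a + k = b + 1 →
      condDim ((Finset.Icc a b).sup S) C
        = ∑ i ∈ Finset.Icc a b, condDim (S i) (((Finset.Icc (i+1) b).sup S) ⊔ C) := by
  intro k
  induction k with
  | zero =>
    intro a ha
    have : Finset.Icc a b = ∅ := by
      apply Finset.Icc_eq_empty; omega
    rw [this]
    simp only [Finset.sup_empty, Finset.sum_empty, condDim]
    rw [Finset.sup_empty, bot_sup_eq]
    ring
  | succ m ih =>
    intro a ha
    have hab : a ≤ b := by omega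
    have hins : Finset.Icc a b = insert a (Finset.Icc (a+1) b) := by
      ext x
      simp only [Finset.mem_Icc, Finset.mem_insert]
      omega
    have hnotmem : a ∉ Finset.Icc (a+1) b := by simp
    rw [hins, Finset.sup_insert, Finset.sum_insert hnotmem, condDim_chain,
      ih (a+1) (by omega)]

end Aux

/-- Proposition 1, dimension version: with `S i ≤ W i` for `i < j`,
`h(W_j | W_[j+1,n]) + Σ_{i<j} h(S_{i→j} | W_[i+1,n])
  ≤ Σ_{i<j} dim S_{i→j} + h(W_j | Σ_{i<j} S_{i→j} + W_[j+1,n])`. -/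
theorem stmt3 {F V : Type*} [Field F] [AddCommGroup V] [Module F V]
    (W S : ℕ → Submodule F V)
    (hfdW : ∀ i, FiniteDimensional F ↥(W i)) (hfdS : ∀ i, FiniteDimensional F ↥(S i))
    (n j : ℕ) (hj1 : 1 ≤ j) (hjn : j ≤ n)
    (hSW : ∀ i, i < j → S i ≤ W i) :
    condDim (W j) ((Finset.Icc (j+1) n).sup W)
      + ∑ i ∈ Finset.Icc 1 (j-1), condDim (S i) ((Finset.Icc (i+1) n).sup W)
    ≤ (∑ i ∈ Finset.Icc 1 (j-1), (finrank F ↥(S i) : ℤ))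
      + condDim (W j) (((Finset.Icc 1 (j-1)).sup S) ⊔ (Finset.Icc (j+1) n).sup W) := by
  classical
  set B : Submodule F V := (Finset.Icc (j+1) n).sup W with hB
  set T : Submodule F V := (Finset.Icc 1 (j-1)).sup S with hT
  haveI : FiniteDimensional F ↥B := Submodule.finiteDimensional_finset_sup _ _
  haveI : FiniteDimensional F ↥T := Submodule.finiteDimensional_finset_sup _ _
  -- Step 1: termwise bound via monotonicity
  have step1 : ∑ i ∈ Finset.Icc 1 (j-1), condDim (S i) ((Finset.Icc (i+1) n).sup W)
      ≤ ∑ i ∈ Finset.Icc 1 (j-1),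
          condDim (S i) (((Finset.Icc (i+1) (j-1)).sup S) ⊔ (W j ⊔ B)) := by
    apply Finset.sum_le_sum
    intro i hi
    simp only [Finset.mem_Icc] at hi
    haveI : FiniteDimensional F ↥(S i ⊔ (Finset.Icc (i+1) n).sup W) := by
      haveI : FiniteDimensional F ↥((Finset.Icc (i+1) n).sup W) :=
        Submodule.finiteDimensional_finset_sup _ _
      infer_instance
    apply condDim_anti
    -- `sup S_[i+1,j-1] ⊔ (W j ⊔ B) ≤ sup W_[i+1,n]`
    apply sup_le
    · apply Finset.sup_le
      intro k hk
      simp only [Finset.mem_Icc] at hk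
      exact le_trans (hSW k (by omega)) (Finset.le_sup (by simp [Finset.mem_Icc]; omega))
    · apply sup_le
      · exact Finset.le_sup (by simp [Finset.mem_Icc]; omega)
      · apply Finset.sup_mono
        intro k hk
        simp only [Finset.mem_Icc] at hk ⊢
        omega
  -- Step 2: the sum equals `condDim T (W j ⊔ B)`
  have step2 : ∑ i ∈ Finset.Icc 1 (j-1),
      condDim (S i) (((Finset.Icc (i+1) (j-1)).sup S) ⊔ (W j ⊔ B))
      = condDim T (W j ⊔ B) :=
    (condDim_sup_sum S (W j ⊔ B) (j-1) (j-1) 1 (by omega)).symm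
  -- Step 3: chain rule both ways
  have chain1 : condDim (W j ⊔ T) B = condDim (W j) (T ⊔ B) + condDim T B :=
    condDim_chain (W j) T B
  have chain2 : condDim (W j ⊔ T) B = condDim T (W j ⊔ B) + condDim (W j) B := by
    rw [sup_comm (W j) T]
    exact condDim_chain T (W j) B
  -- Step 4: `condDim T B ≤ Σ dim S_i`
  have step4 : condDim T B ≤ ∑ i ∈ Finset.Icc 1 (j-1), (finrank F ↥(S i) : ℤ) := by
    calc condDim T B ≤ (finrank F ↥T : ℤ) := condDim_le_finrank T B
      _ ≤ _ := finrank_finset_sup_le _ _ hfdS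
  linarith [step1, step2, chain1, chain2, step4]
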